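/- For z = n/2 with n an odd positive integer and ν = −1/2 + iα with α real, the coefficient S(n/2) = Γ(−n/2)Γ((−ν+n/2+1)/2)Γ((ν+n/2+2)/2)/(Γ(n/2)Γ((−ν−n/2+1)/2)Γ((ν−n/2+2)/2)) equals 2^{−n}·(Γ(−n/2)/Γ(n/2))·α·(coth(πα/2))^{(−1)^{(n−1)/2}}·∏_{ℓ=1}^{(n−1)/2}(α² + ℓ²). -/

import Mathlib

open Complex Real



lemma auxGammaNeZero {s : ℂ} (hs : s.im ≠ 0) : Complex.Gamma s ≠ 0 := by
  refine Complex.Gamma_ne_zero fun k hk => hs ?_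
  rw [hk]; simp

lemma auxImHalf (z : ℂ) : (z / 2).im = z.im / 2 := by
  rw [show (2:ℂ) = ((2:ℝ):ℂ) by norm_num, Complex.div_ofReal_im]

lemma auxGammaShift (w : ℂ) (hw : w.im ≠ 0) (k : ℕ) :
    Complex.Gamma (w + k) = (∏ j ∈ Finset.range k, (w + j)) * Complex.Gamma w := by
  induction k with
  | zero => simp
  | succ k ih =>
    have hne : w + k ≠ 0 := by
      intro h
      have : (w + (k:ℂ)).im = 0 := by rw [h]; simp
      simp at this; exact hw this
    have : (w : ℂ) + (k + 1 : ℕ) = (w + k) + 1 := by push_cast; ring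
    rw [this, Complex.Gamma_add_one _ hne, ih, Finset.prod_range_succ]
    ring

lemma auxCosNatPi (m : ℕ) : Complex.cos (π * m) = (-1) ^ m := by
  induction m with
  | zero => simp
  | succ m ih =>
    have : (π : ℂ) * (m + 1 : ℕ) = π * m + π := by push_cast; ring
    rw [this, Complex.cos_add, Complex.cos_pi, Complex.sin_pi, ih]
    ring

lemma auxCoth (x : ℝ) (hx : x ≠ 0) (m : ℕ) :
    (Real.cosh x + (-1:ℝ) ^ m) / Real.sinh x
      = (Real.cosh (x / 2) / Real.sinh (x / 2)) ^ ((-1:ℤ) ^ m) := by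
  have h2 : Real.sinh (x / 2) ≠ 0 := Real.sinh_ne_zero.mpr (div_ne_zero hx two_ne_zero)
  have hs : Real.sinh x ≠ 0 := Real.sinh_ne_zero.mpr hx
  have hc : Real.cosh (x / 2) ≠ 0 := (Real.cosh_pos _).ne'
  have hcosh : Real.cosh x = Real.cosh (x/2) ^ 2 + Real.sinh (x/2) ^ 2 := by
    rw [← Real.cosh_two_mul]; ring_nf
  have hsinh : Real.sinh x = 2 * Real.sinh (x/2) * Real.cosh (x/2) := by
    rw [← Real.sinh_two_mul]; ring_nf
  have hid := Real.cosh_sq_sub_sinh_sq (x/2)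
  rcases Nat.even_or_odd m with he | ho
  · rw [he.neg_one_pow, he.neg_one_pow, zpow_one, hcosh, hsinh]
    field_simp
    linear_combination (-1:ℝ) * hid
  · rw [ho.neg_one_pow, ho.neg_one_pow, zpow_neg, zpow_one, inv_div, hcosh, hsinh]
    field_simp
    linear_combination hid

lemma auxKeyStep (m : ℕ) (α : ℝ) (hα : α ≠ 0) :
    Complex.Gamma (((m:ℂ) + 2 - (α:ℂ)*I)/2) * Complex.Gamma (((m:ℂ) + 2 + (α:ℂ)*I)/2)
      / (Complex.Gamma ((1 - (m:ℂ) - (α:ℂ)*I)/2) * Complex.Gamma ((1 - (m:ℂ) + (α:ℂ)*I)/2))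
    = ((2:ℂ)^(2*m+1))⁻¹ * (α:ℂ)
        * (((Real.cosh (π*α/2) / Real.sinh (π*α/2)) ^ ((-1:ℤ)^m) : ℝ) : ℂ)
        * ∏ ℓ ∈ Finset.Icc 1 m, ((α:ℂ)^2 + (ℓ:ℂ)^2) := by
  set w : ℂ := (α:ℂ) * I with hw
  have hwim : w.im = α := by simp [hw]
  -- names
  set G1 := Complex.Gamma (((m:ℂ) + 2 + w)/2) with hG1
  set G2 := Complex.Gamma (((m:ℂ) + 2 - w)/2) with hG2
  set H1 := Complex.Gamma ((1 + (m:ℂ) + w)/2) with hH1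
  set H2 := Complex.Gamma ((1 + (m:ℂ) - w)/2) with hH2
  set C1 := Complex.Gamma ((1 - (m:ℂ) - w)/2) with hC1d
  set C2 := Complex.Gamma ((1 - (m:ℂ) + w)/2) with hC2d
  -- nonvanishing
  have him1 : ((1 - (m:ℂ) - w)/2).im = -α/2 := by rw [auxImHalf]; simp [hwim]
  have him2 : ((1 - (m:ℂ) + w)/2).im = α/2 := by rw [auxImHalf]; simp [hwim]
  have him3 : ((1 + (m:ℂ) + w)/2).im = α/2 := by rw [auxImHalf]; simp [hwim]
  have him4 : ((1 + (m:ℂ) - w)/2).im = -α/2 := by rw [auxImHalf]; simp [hwim]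
  have hC1 : C1 ≠ 0 := auxGammaNeZero (by rw [him1]; simpa using hα)
  have hC2 : C2 ≠ 0 := auxGammaNeZero (by rw [him2]; simpa using hα)
  have hH1ne : H1 ≠ 0 := auxGammaNeZero (by rw [him3]; simpa using hα)
  have hH2ne : H2 ≠ 0 := auxGammaNeZero (by rw [him4]; simpa using hα)
  -- reflection
  have E3 := Complex.Gamma_mul_Gamma_one_sub ((1 - (m:ℂ) - w)/2)
  rw [show (1:ℂ) - (1 - (m:ℂ) - w)/2 = (1 + (m:ℂ) + w)/2 by ring] at E3
  have E4 := Complex.Gamma_mul_Gamma_one_sub ((1 - (m:ℂ) + w)/2)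
  rw [show (1:ℂ) - (1 - (m:ℂ) + w)/2 = (1 + (m:ℂ) - w)/2 by ring] at E4
  set sA := Complex.sin ((π:ℂ) * ((1 - (m:ℂ) - w)/2)) with hsAd
  set sB := Complex.sin ((π:ℂ) * ((1 - (m:ℂ) + w)/2)) with hsBd
  have hsA : sA ≠ 0 := by
    intro h; rw [h, div_zero] at E3; exact (mul_ne_zero hC1 hH1ne) E3
  have hsB : sB ≠ 0 := by
    intro h; rw [h, div_zero] at E4; exact (mul_ne_zero hC2 hH2ne) E4
  have e3 : C1 * H1 * sA = π := by rw [E3]; exact div_mul_cancel₀ _ hsA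
  have e4 : C2 * H2 * sB = π := by rw [E4]; exact div_mul_cancel₀ _ hsB
  -- duplication
  have E1 := Complex.Gamma_mul_Gamma_add_half ((1 + (m:ℂ) + w)/2)
  rw [show (1 + (m:ℂ) + w)/2 + 1/2 = ((m:ℂ) + 2 + w)/2 by ring,
      show 2 * ((1 + (m:ℂ) + w)/2) = 1 + (m:ℂ) + w by ring] at E1
  have E2 := Complex.Gamma_mul_Gamma_add_half ((1 + (m:ℂ) - w)/2)
  rw [show (1 + (m:ℂ) - w)/2 + 1/2 = ((m:ℂ) + 2 - w)/2 by ring,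
      show 2 * ((1 + (m:ℂ) - w)/2) = 1 + (m:ℂ) - w by ring] at E2
  set tp := (2:ℂ) ^ ((1:ℂ) - (1 + (m:ℂ) + w)) with htp
  set tm := (2:ℂ) ^ ((1:ℂ) - (1 + (m:ℂ) - w)) with htm
  -- shift
  have hwne : w.im ≠ 0 := by rw [hwim]; exact hα
  have hmwne : (-w).im ≠ 0 := by simpa using hwne
  set Pp := ∏ j ∈ Finset.range (m+1), (w + (j:ℂ)) with hPp
  set Pm := ∏ j ∈ Finset.range (m+1), (-w + (j:ℂ)) with hPm
  have hGp : Complex.Gamma (1 + (m:ℂ) + w) = Pp * Complex.Gamma w := by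
    rw [show 1 + (m:ℂ) + w = w + ((m+1 : ℕ):ℂ) by push_cast; ring]
    exact auxGammaShift w hwne (m+1)
  have hGm : Complex.Gamma (1 + (m:ℂ) - w) = Pm * Complex.Gamma (-w) := by
    rw [show 1 + (m:ℂ) - w = -w + ((m+1 : ℕ):ℂ) by push_cast; ring]
    exact auxGammaShift (-w) hmwne (m+1)
  rw [hGp] at E1
  rw [hGm] at E2
  -- Gamma(w) * Gamma(-w)
  set S : ℂ := ((Real.sinh (π*α) : ℝ) : ℂ) with hSd
  have hS : S ≠ 0 := by
    rw [hSd]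
    exact_mod_cast Complex.ofReal_ne_zero.mpr
      (Real.sinh_ne_zero.mpr (mul_ne_zero Real.pi_ne_zero hα))
  have hsinw : Complex.sin ((π:ℂ) * w) = S * I := by
    rw [show (π:ℂ) * w = ((π*α : ℝ):ℂ) * I by push_cast; ring, Complex.sin_mul_I, hSd,
      Complex.ofReal_sinh]
  have hrefl := Complex.Gamma_mul_Gamma_one_sub w
  have h1w : Complex.Gamma (1 - w) = -w * Complex.Gamma (-w) := by
    rw [show (1:ℂ) - w = -w + 1 by ring, Complex.Gamma_add_one _ (by
      intro h; apply hmwne; rw [h]; simp)]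
  rw [h1w, hsinw] at hrefl
  have hSI : S * I ≠ 0 := mul_ne_zero hS I_ne_zero
  have hws : (α:ℂ) * S = -w * (S * I) := by
    rw [hw]; ring_nf; rw [I_sq]; ring
  have hprod : Complex.Gamma w * Complex.Gamma (-w) * ((α:ℂ) * S) = π := by
    have h2 := congrArg (· * (S * I)) hrefl
    rw [div_mul_cancel₀ _ hSI] at h2
    rw [hws]
    linear_combination h2
  -- sin product
  set K : ℂ := ((Real.cosh (π*α) : ℝ) : ℂ) with hKd
  have F5 : sA * sB * 2 = K + (-1:ℂ)^m := by
    have hcc := Complex.cos_sub_cos ((π:ℂ)*(1-(m:ℂ))) (-((π:ℂ)*w))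
    rw [show ((π:ℂ)*(1-(m:ℂ)) + -((π:ℂ)*w))/2 = (π:ℂ)*((1-(m:ℂ)-w)/2) by ring,
        show ((π:ℂ)*(1-(m:ℂ)) - -((π:ℂ)*w))/2 = (π:ℂ)*((1-(m:ℂ)+w)/2) by ring,
        Complex.cos_neg] at hcc
    have hcw : Complex.cos ((π:ℂ)*w) = K := by
      rw [show (π:ℂ)*w = ((π*α:ℝ):ℂ)*I by push_cast; ring, Complex.cos_mul_I, hKd,
        Complex.ofReal_cosh]
    have hcm : Complex.cos ((π:ℂ)*(1-(m:ℂ))) = -(-1:ℂ)^m := by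
      rw [show (π:ℂ)*(1-(m:ℂ)) = π - π*(m:ℂ) by ring, Complex.cos_pi_sub, auxCosNatPi]
    rw [hcw, hcm] at hcc
    linear_combination hcc
  -- powers of two
  have F4 : tp * tm * (2:ℂ)^(2*m) = 1 := by
    rw [htp, htm, ← Complex.cpow_add _ _ two_ne_zero,
      show (1:ℂ)-(1+(m:ℂ)+w) + ((1:ℂ)-(1+(m:ℂ)-w)) = -((2*m:ℕ):ℂ) by push_cast; ring,
      Complex.cpow_neg, Complex.cpow_natCast]
    exact inv_mul_cancel₀ (pow_ne_zero _ two_ne_zero)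
  have hsq : (Real.sqrt π : ℂ) * (Real.sqrt π : ℂ) = (π:ℂ) := by
    rw [← Complex.ofReal_mul, Real.mul_self_sqrt Real.pi_pos.le]
  -- polynomial product
  set PR := ∏ ℓ ∈ Finset.Icc 1 m, ((α:ℂ)^2 + (ℓ:ℂ)^2) with hPR
  have F3 : Pp * Pm = (α:ℂ)^2 * PR := by
    rw [hPp, hPm, ← Finset.prod_mul_distrib]
    have hw2 : w^2 = -(α:ℂ)^2 := by rw [hw, mul_pow, I_sq]; ring
    have hfac : ∀ j ∈ Finset.range (m+1), (w + (j:ℂ)) * (-w + (j:ℂ)) = (α:ℂ)^2 + (j:ℂ)^2 :=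
      fun j _ => by linear_combination (-1:ℂ) * hw2
    rw [Finset.prod_congr rfl hfac, Finset.prod_range_succ']
    have hIcc : PR = ∏ j ∈ Finset.range m, ((α:ℂ)^2 + ((j+1:ℕ):ℂ)^2) := by
      rw [hPR, ← Finset.Ico_add_one_right_eq_Icc, Finset.prod_Ico_eq_prod_range]
      simp [add_comm]
    rw [hIcc]
    push_cast
    ring
  -- coth
  set cothC : ℂ := (((Real.cosh (π*α/2) / Real.sinh (π*α/2)) ^ ((-1:ℤ)^m) : ℝ) : ℂ) with hcoth
  have F6 : cothC * S = K + (-1:ℂ)^m := by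
    have h := auxCoth (π*α) (mul_ne_zero Real.pi_ne_zero hα) m
    have hsr : Real.sinh (π*α) ≠ 0 := Real.sinh_ne_zero.mpr (mul_ne_zero Real.pi_ne_zero hα)
    rw [div_eq_iff hsr] at h
    rw [hcoth, hSd, hKd, ← Complex.ofReal_mul, ← h]
    push_cast
    ring
  -- assembly
  have hpi : (π:ℂ) ≠ 0 := Complex.ofReal_ne_zero.mpr Real.pi_ne_zero
  have hX : H1*H2*sA*sB ≠ 0 := by
    exact mul_ne_zero (mul_ne_zero (mul_ne_zero hH1ne hH2ne) hsA) hsB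
  have hY : ((α:ℂ)*S) * (2:ℂ)^(2*m) * 2 ≠ 0 := by
    refine mul_ne_zero (mul_ne_zero (mul_ne_zero ?_ hS) (pow_ne_zero _ two_ne_zero)) two_ne_zero
    exact_mod_cast Complex.ofReal_ne_zero.mpr hα
  have hnum : G2*G1*(H1*H2*sA*sB) = ((2:ℂ)^(2*m+1))⁻¹ * (α:ℂ) * cothC * PR * ((π:ℂ)*(π:ℂ)) := by
    apply mul_right_cancel₀ hY
    calc G2*G1*(H1*H2*sA*sB) * (((α:ℂ)*S) * (2:ℂ)^(2*m) * 2)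
        = (H1*G1)*((H2*G2)) * ((sA*sB)*(((α:ℂ)*S) * (2:ℂ)^(2*m) * 2)) := by ring
      _ = (Pp * Complex.Gamma w * tp * (Real.sqrt π : ℂ))
            * (Pm * Complex.Gamma (-w) * tm * (Real.sqrt π : ℂ))
            * ((sA*sB)*(((α:ℂ)*S) * (2:ℂ)^(2*m) * 2)) := by rw [E1, E2]
      _ = (Pp * Pm) * (Complex.Gamma w * Complex.Gamma (-w) * ((α:ℂ)*S))
            * (tp * tm * (2:ℂ)^(2*m)) * ((Real.sqrt π : ℂ) * (Real.sqrt π : ℂ))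
            * (sA * sB * 2) := by ring
      _ = ((α:ℂ)^2 * PR) * (π:ℂ) * 1 * (π:ℂ) * (K + (-1:ℂ)^m) := by
            rw [F3, hprod, F4, hsq, F5]
      _ = ((2:ℂ)^(2*m+1))⁻¹ * (α:ℂ) * cothC * PR * ((π:ℂ)*(π:ℂ))
            * (((α:ℂ)*S) * (2:ℂ)^(2*m) * 2) := by
            rw [← F6]
            field_simp
            ring
  have hden : (C1*C2)*(H1*H2*sA*sB) = (π:ℂ)*(π:ℂ) := by
    rw [show (C1*C2)*(H1*H2*sA*sB) = (C1*H1*sA)*(C2*H2*sB) by ring, e3, e4]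
  calc G2*G1/(C1*C2)
      = (G2*G1*(H1*H2*sA*sB))/((C1*C2)*(H1*H2*sA*sB)) := (mul_div_mul_right _ _ hX).symm
    _ = (((2:ℂ)^(2*m+1))⁻¹ * (α:ℂ) * cothC * PR * ((π:ℂ)*(π:ℂ)))/((π:ℂ)*(π:ℂ)) := by
        rw [hnum, hden]
    _ = ((2:ℂ)^(2*m+1))⁻¹ * (α:ℂ) * cothC * PR := by
        rw [mul_div_assoc, div_self (mul_ne_zero hpi hpi), mul_one]

/-- For `z = n/2` with `n` an odd positive integer and `ν = −1/2 + iα` with `α` real nonzero,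
the scattering coefficient
`S(n/2) = Γ(−n/2)Γ((−ν+n/2+1)/2)Γ((ν+n/2+2)/2)/(Γ(n/2)Γ((−ν−n/2+1)/2)Γ((ν−n/2+2)/2))`
equals `2^{−n}·(Γ(−n/2)/Γ(n/2))·α·(coth(πα/2))^{(−1)^{(n−1)/2}}·∏_{ℓ=1}^{(n−1)/2}(α² + ℓ²)`. -/
theorem scattering_coefficient_odd_dimension (n : ℕ) (hn : Odd n) (hpos : 0 < n)
    (α : ℝ) (hα : α ≠ 0) :
    Complex.Gamma (-((n : ℂ) / 2))
        * Complex.Gamma ((-(-1 / 2 + ↑α * I) + (n : ℂ) / 2 + 1) / 2)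
        * Complex.Gamma (((-1 / 2 + ↑α * I) + (n : ℂ) / 2 + 2) / 2)
      / (Complex.Gamma ((n : ℂ) / 2)
        * Complex.Gamma ((-(-1 / 2 + ↑α * I) - (n : ℂ) / 2 + 1) / 2)
        * Complex.Gamma (((-1 / 2 + ↑α * I) - (n : ℂ) / 2 + 2) / 2))
    = 2 ^ (-(n : ℤ)) * (Complex.Gamma (-((n : ℂ) / 2)) / Complex.Gamma ((n : ℂ) / 2)) * (α : ℂ)
        * ((((Real.cosh (π * α / 2) / Real.sinh (π * α / 2)) ^ ((-1 : ℤ) ^ ((n - 1) / 2)) : ℝ)) : ℂ)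
        * ∏ ℓ ∈ Finset.Icc 1 ((n - 1) / 2), ((α : ℂ) ^ 2 + (ℓ : ℂ) ^ 2) := by
  obtain ⟨m, rfl⟩ := hn
  have hm2 : (2*m+1-1)/2 = m := by omega
  simp only [hm2]
  rw [show (-(-1 / 2 + (α:ℂ) * I) + ((2*m+1 : ℕ) : ℂ) / 2 + 1) / 2
        = ((m:ℂ) + 2 - (α:ℂ)*I)/2 by push_cast; ring,
      show ((-1 / 2 + (α:ℂ) * I) + ((2*m+1 : ℕ) : ℂ) / 2 + 2) / 2
        = ((m:ℂ) + 2 + (α:ℂ)*I)/2 by push_cast; ring,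
      show (-(-1 / 2 + (α:ℂ) * I) - ((2*m+1 : ℕ) : ℂ) / 2 + 1) / 2
        = (1 - (m:ℂ) - (α:ℂ)*I)/2 by push_cast; ring,
      show ((-1 / 2 + (α:ℂ) * I) - ((2*m+1 : ℕ) : ℂ) / 2 + 2) / 2
        = (1 - (m:ℂ) + (α:ℂ)*I)/2 by push_cast; ring,
      mul_assoc (Complex.Gamma (-(((2*m+1 : ℕ) : ℂ) / 2))),
      mul_assoc (Complex.Gamma (((2*m+1 : ℕ) : ℂ) / 2)),
      mul_div_mul_comm, auxKeyStep m α hα,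
      show ((2:ℂ)) ^ (-((2*m+1 : ℕ) : ℤ)) = ((2:ℂ)^(2*m+1))⁻¹ by
        rw [zpow_neg, zpow_natCast]]
  ring
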